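/- Let (γ,d) = (n_s,m_s) be the last vertex of the Newton polygon of q, let (n_{s-1},m_{s-1}) be the previous vertex, and set l_1 = (n_s - n_{s-1})/(m_{s-1} - m_s). Suppose δ ≤ T_{s-1}, where T_{s-1} is the y-intercept of the line through (n_{s-1},m_{s-1}) and (n_s,m_s). Then l_1·δ ≤ γ + l_1·d ≤ i + l_1·j for every (i,j) with b_{ij} ≠ 0. -/
import Mathlib


/-- Let (γ,d)=(n_s,m_s) be the last vertex of the Newton polygon N(q) of q,
(n',m') = (n_{s-1},m_{s-1}) the previous vertex, l₁ = (n_s - n_{s-1})/(m_{s-1}-m_s), and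
suppose δ ≤ T_{s-1}, where T_{s-1} = (γ + l₁ d)/l₁ is the y-intercept of the line through
the two vertices (the segment joining them being an edge, i.e. an exposed face, of N(q)).
Then l₁δ ≤ γ + l₁d ≤ i + l₁j for every (i,j) with b_{ij} ≠ 0. -/
theorem stmt1
    (S : Set (ℕ × ℕ)) (N : Set (ℝ × ℝ))
    (hN : N = convexHull ℝ (⋃ p ∈ S, {x : ℝ × ℝ | (p.1 : ℝ) ≤ x.1 ∧ (p.2 : ℝ) ≤ x.2}))
    (n' m' γ d δ : ℕ) (hδ : 2 ≤ δ)
    (hn : n' < γ) (hm : d < m')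
    (l1 : ℝ) (hl1 : l1 = ((γ : ℝ) - n') / ((m' : ℝ) - d))
    (hface : IsExposed ℝ N (segment ℝ (((n' : ℝ), (m' : ℝ))) (((γ : ℝ), (d : ℝ)))))
    (T : ℝ) (hT : T = ((γ : ℝ) + l1 * d) / l1)
    (hδT : (δ : ℝ) ≤ T) :
    ∀ p ∈ S, l1 * δ ≤ (γ : ℝ) + l1 * d ∧ (γ : ℝ) + l1 * d ≤ (p.1 : ℝ) + l1 * p.2 := by
  have hng : (0:ℝ) < (γ : ℝ) - n' := by
    have : (n' : ℝ) < γ := by exact_mod_cast hn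
    linarith
  have hmd : (0:ℝ) < (m' : ℝ) - d := by
    have : (d : ℝ) < m' := by exact_mod_cast hm
    linarith
  have hl1pos : 0 < l1 := by rw [hl1]; exact div_pos hng hmd
  -- first inequality
  have hfirst : l1 * δ ≤ (γ : ℝ) + l1 * d := by
    rw [hT, le_div_iff₀ hl1pos] at hδT
    nlinarith
  -- set up the union set
  set U : Set (ℝ × ℝ) := ⋃ p ∈ S, {x : ℝ × ℝ | (p.1 : ℝ) ≤ x.1 ∧ (p.2 : ℝ) ≤ x.2} with hU
  -- upward closedness of N
  have hup : ∀ v : ℝ × ℝ, 0 ≤ v.1 → 0 ≤ v.2 → ∀ x ∈ N, x + v ∈ N := by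
    intro v hv1 hv2 x hx
    have hconv : Convex ℝ ((fun x : ℝ × ℝ => x + v) ⁻¹' N) := by
      rw [hN]
      exact (convex_convexHull ℝ U).translate_preimage_left v
    have hUsub : U ⊆ (fun x : ℝ × ℝ => x + v) ⁻¹' N := by
      intro u hu
      simp only [hU, Set.mem_iUnion, Set.mem_setOf_eq] at hu
      obtain ⟨q, hq, h1, h2⟩ := hu
      have : u + v ∈ U := by
        simp only [hU, Set.mem_iUnion, Set.mem_setOf_eq]
        exact ⟨q, hq, by simpa using le_trans h1 (by linarith), by
          simpa using le_trans h2 (by linarith)⟩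
      simp only [Set.mem_preimage]
      rw [hN]
      exact subset_convexHull ℝ U this
    have hsub := convexHull_min hUsub hconv
    rw [← hN] at hsub
    exact hsub hx
  intro p hp
  refine ⟨hfirst, ?_⟩
  -- get the exposing functional
  set A : ℝ × ℝ := ((γ : ℝ), (d : ℝ)) with hA
  set B : ℝ × ℝ := ((n' : ℝ), (m' : ℝ)) with hB
  obtain ⟨l, hl⟩ := hface ⟨A, right_mem_segment ℝ B A⟩
  have hAmem : A ∈ segment ℝ B A := right_mem_segment ℝ B A
  have hBmem : B ∈ segment ℝ B A := left_mem_segment ℝ B A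
  rw [hl] at hAmem hBmem
  obtain ⟨hAN, hAmax⟩ := hAmem
  obtain ⟨hBN, hBmax⟩ := hBmem
  set f1 : ℝ := l (1, 0) with hf1
  set f2 : ℝ := l (0, 1) with hf2
  have hlin : ∀ x : ℝ × ℝ, l x = x.1 * f1 + x.2 * f2 := by
    intro x
    have hx : x = x.1 • ((1:ℝ), (0:ℝ)) + x.2 • ((0:ℝ), (1:ℝ)) := by
      ext <;> simp
    rw [hx, map_add, map_smul, map_smul, smul_eq_mul, smul_eq_mul]
    simp [hf1, hf2]
  -- f1 ≤ 0, f2 ≤ 0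
  have hf1le : f1 ≤ 0 := by
    have h1 : A + ((1:ℝ), (0:ℝ)) ∈ N := hup (1, 0) (by norm_num) (by norm_num) A hAN
    have := hAmax _ h1
    rw [hlin, hlin] at this
    simp only [Prod.fst_add, Prod.snd_add] at this
    nlinarith
  have hf2le : f2 ≤ 0 := by
    have h1 : A + ((0:ℝ), (1:ℝ)) ∈ N := hup (0, 1) (by norm_num) (by norm_num) A hAN
    have := hAmax _ h1
    rw [hlin, hlin] at this
    simp only [Prod.fst_add, Prod.snd_add] at this
    nlinarith
  -- f B = f A
  have heq : (n' : ℝ) * f1 + (m' : ℝ) * f2 = (γ : ℝ) * f1 + (d : ℝ) * f2 := by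
    have h1 := hAmax _ hBN
    have h2 := hBmax _ hAN
    rw [hlin, hlin] at h1 h2
    simp only [hA, hB] at h1 h2
    linarith
  -- f2 = f1 * l1
  have hf2eq : f2 = f1 * l1 := by
    have hl1' : l1 * ((m' : ℝ) - d) = (γ : ℝ) - n' := by
      rw [hl1]; field_simp
    have : f2 * ((m' : ℝ) - d) = f1 * (l1 * ((m' : ℝ) - d)) := by
      rw [hl1']; linarith
    have h := mul_right_cancel₀ (ne_of_gt hmd) (by linarith [this] :
      f2 * ((m' : ℝ) - d) = (f1 * l1) * ((m' : ℝ) - d))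
    exact h
  -- f1 < 0
  have hf1lt : f1 < 0 := by
    rcases lt_or_eq_of_le hf1le with h | h
    · exact h
    · exfalso
      have hf20 : f2 = 0 := by rw [hf2eq, h, zero_mul]
      -- l = 0, so exposed set = N, so A + (1,0) ∈ segment
      have hAin : A + ((1:ℝ), (0:ℝ)) ∈ segment ℝ B A := by
        rw [hl]
        refine ⟨hup (1, 0) (by norm_num) (by norm_num) A hAN, ?_⟩
        intro y hy
        simp [hlin, h, hf20]
      obtain ⟨a, b, ha, hb, hab, habeq⟩ := hAin
      have h1 : a * (n' : ℝ) + b * (γ : ℝ) = (γ : ℝ) + 1 := by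
        have := congrArg Prod.fst habeq
        simpa [hA, hB] using this
      have h2 : a * (m' : ℝ) + b * (d : ℝ) = (d : ℝ) := by
        have := congrArg Prod.snd habeq
        simpa [hA, hB] using this
      have ha0 : a = 0 := by nlinarith
      have hb1 : b = 1 := by linarith
      rw [ha0, hb1] at h1
      linarith
  -- p's quadrant point is in N
  have hpN : ((p.1 : ℝ), (p.2 : ℝ)) ∈ N := by
    have : ((p.1 : ℝ), (p.2 : ℝ)) ∈ U := by
      simp only [hU, Set.mem_iUnion, Set.mem_setOf_eq]
      exact ⟨p, hp, le_refl _, le_refl _⟩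
    exact (subset_convexHull ℝ U |>.trans (by rw [hN])) this
  have hle := hAmax _ hpN
  rw [hlin, hlin] at hle
  simp only [hA] at hle
  rw [hf2eq] at hle
  -- hle : p.1 * f1 + p.2 * (f1 * l1) ≤ γ * f1 + d * (f1 * l1)
  nlinarith [hle, hf1lt]
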